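/- arXiv:1607.03842 — 7 statements merged into one kernel-verified Lean document; each statement's English description precedes it below -/
import Mathlib

section
/- Let P1 and P2 be two stochastic matrices on a finite state space, r1 and r2 two reward vectors, γ ∈ (0,1), and let v1 = (I - γP1)^{-1} r1 and v2 = (I - γP2)^{-1} r2 be the corresponding value functions. If rewards are bounded by R_max in absolute value and for every state x, ‖P1(·|x) - P2(·|x)‖_1 ≤ e(x), then componentwise (I - γP1)^{-1}(r1 - r2 - (γ R_max/(1-γ)) e) ≤ v1 - v2 ≤ (I - γP1)^{-1}(r1 - r2 + (γ R_max/(1-γ)) e). -/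
open Matrix

section Aux

variable {X : Type*} [Fintype X] [Nonempty X]

omit [Nonempty X] in
private lemma row_bound {P : Matrix X X ℝ} (hP0 : ∀ x y, 0 ≤ P x y)
    (hPs : ∀ x, ∑ y, P x y = 1) {u : X → ℝ} {M : ℝ} (hM : ∀ y, u y ≤ M) (x : X) :
    ∑ y, P x y * u y ≤ M := by
  calc ∑ y, P x y * u y ≤ ∑ y, P x y * M := by
        apply Finset.sum_le_sum; intro y _
        exact mul_le_mul_of_nonneg_left (hM y) (hP0 x y)
    _ = M := by rw [← Finset.sum_mul, hPs x, one_mul]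

omit [Nonempty X] in
private lemma row_bound_ge {P : Matrix X X ℝ} (hP0 : ∀ x y, 0 ≤ P x y)
    (hPs : ∀ x, ∑ y, P x y = 1) {u : X → ℝ} {M : ℝ} (hM : ∀ y, M ≤ u y) (x : X) :
    M ≤ ∑ y, P x y * u y := by
  calc M = ∑ y, P x y * M := by rw [← Finset.sum_mul, hPs x, one_mul]
    _ ≤ ∑ y, P x y * u y := by
        apply Finset.sum_le_sum; intro y _
        exact mul_le_mul_of_nonneg_left (hM y) (hP0 x y)

private lemma ker_zero {P : Matrix X X ℝ} (hP0 : ∀ x y, 0 ≤ P x y)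
    (hPs : ∀ x, ∑ y, P x y = 1) {γ : ℝ} (hγ0 : 0 ≤ γ) (hγ1 : γ < 1)
    {u : X → ℝ} (h : ∀ x, u x = γ * ∑ y, P x y * u y) : u = 0 := by
  obtain ⟨x0, hx0⟩ := Finite.exists_max (fun x => |u x|)
  have key : |u x0| ≤ γ * |u x0| := by
    conv_lhs => rw [h x0]
    rw [abs_mul, abs_of_nonneg hγ0]
    refine mul_le_mul_of_nonneg_left ?_ hγ0
    calc |∑ y, P x0 y * u y| ≤ ∑ y, |P x0 y * u y| := Finset.abs_sum_le_sum_abs _ _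
      _ = ∑ y, P x0 y * |u y| := by
          apply Finset.sum_congr rfl; intro y _
          rw [abs_mul, abs_of_nonneg (hP0 x0 y)]
      _ ≤ |u x0| := row_bound hP0 hPs (fun y => hx0 y) x0
  have hM0 : |u x0| ≤ 0 := by nlinarith [abs_nonneg (u x0)]
  funext x
  have := hx0 x
  have : |u x| ≤ 0 := le_trans this hM0
  simpa using le_antisymm this (abs_nonneg _)

/-- Monotonicity: if u = w + γ P u with w ≥ 0 then u ≥ 0. -/
private lemma mono_pos {P : Matrix X X ℝ} (hP0 : ∀ x y, 0 ≤ P x y)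
    (hPs : ∀ x, ∑ y, P x y = 1) {γ : ℝ} (hγ0 : 0 ≤ γ) (hγ1 : γ < 1)
    {u w : X → ℝ} (h : ∀ x, u x = w x + γ * ∑ y, P x y * u y)
    (hw : ∀ x, 0 ≤ w x) : ∀ x, 0 ≤ u x := by
  obtain ⟨x0, hx0⟩ := Finite.exists_min u
  have h1 : u x0 ≤ ∑ y, P x0 y * u y := row_bound_ge hP0 hPs (fun y => hx0 y) x0
  have h2 : γ * u x0 ≤ γ * ∑ y, P x0 y * u y := mul_le_mul_of_nonneg_left h1 hγ0
  have h3 := h x0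
  have h5 : 0 ≤ (1 - γ) * u x0 := by nlinarith [hw x0]
  have h4 : 0 ≤ u x0 := by nlinarith [h5, hγ1]
  intro x; exact le_trans h4 (hx0 x)

/-- Comparison: if a = ca + γ P a, b = cb + γ P b and cb ≤ ca then b ≤ a. -/
private lemma compare {P : Matrix X X ℝ} (hP0 : ∀ x y, 0 ≤ P x y)
    (hPs : ∀ x, ∑ y, P x y = 1) {γ : ℝ} (hγ0 : 0 ≤ γ) (hγ1 : γ < 1)
    {a b ca cb : X → ℝ}
    (ha : ∀ x, a x = ca x + γ * ∑ y, P x y * a y)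
    (hb : ∀ x, b x = cb x + γ * ∑ y, P x y * b y)
    (hc : ∀ x, cb x ≤ ca x) : ∀ x, b x ≤ a x := by
  have h : ∀ x, (a x - b x) = (ca x - cb x) + γ * ∑ y, P x y * (a y - b y) := by
    intro x
    have : ∑ y, P x y * (a y - b y) = (∑ y, P x y * a y) - ∑ y, P x y * b y := by
      rw [← Finset.sum_sub_distrib]
      apply Finset.sum_congr rfl; intro y _; ring
    rw [this, ha x, hb x]; ring
  have := mono_pos hP0 hPs hγ0 hγ1 h (fun x => by linarith [hc x])
  intro x; linarith [this x]

private lemma value_sup_bound {P : Matrix X X ℝ} (hP0 : ∀ x y, 0 ≤ P x y)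
    (hPs : ∀ x, ∑ y, P x y = 1) {γ : ℝ} (hγ0 : 0 ≤ γ) (hγ1 : γ < 1)
    {r v : X → ℝ} {R : ℝ} (hr : ∀ x, |r x| ≤ R)
    (h : ∀ x, v x = r x + γ * ∑ y, P x y * v y) : ∀ x, |v x| ≤ R / (1 - γ) := by
  obtain ⟨x0, hx0⟩ := Finite.exists_max (fun x => |v x|)
  have key : |v x0| ≤ R + γ * |v x0| := by
    conv_lhs => rw [h x0]
    refine le_trans (abs_add_le _ _) ?_
    refine add_le_add (hr x0) ?_
    rw [abs_mul, abs_of_nonneg hγ0]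
    refine mul_le_mul_of_nonneg_left ?_ hγ0
    calc |∑ y, P x0 y * v y| ≤ ∑ y, |P x0 y * v y| := Finset.abs_sum_le_sum_abs _ _
      _ = ∑ y, P x0 y * |v y| := by
          apply Finset.sum_congr rfl; intro y _
          rw [abs_mul, abs_of_nonneg (hP0 x0 y)]
      _ ≤ |v x0| := row_bound hP0 hPs (fun y => hx0 y) x0
  have hb : |v x0| ≤ R / (1 - γ) := by
    rw [le_div_iff₀ (by linarith)]; nlinarith
  intro x; exact le_trans (hx0 x) hb

end Aux

section Aux2

variable {X : Type*} [Fintype X] [DecidableEq X]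

private lemma oneSub_mulVec (P : Matrix X X ℝ) (γ : ℝ) (f : X → ℝ) (x : X) :
    ((1 - γ • P).mulVec f) x = f x - γ * ∑ y, P x y * f y := by
  rw [Matrix.sub_mulVec, Matrix.one_mulVec]
  simp [Matrix.mulVec, dotProduct, Finset.mul_sum, mul_assoc]

private lemma oneSub_det_isUnit {P : Matrix X X ℝ} (hP0 : ∀ x y, 0 ≤ P x y)
    (hPs : ∀ x, ∑ y, P x y = 1) {γ : ℝ} (hγ0 : 0 ≤ γ) (hγ1 : γ < 1) [Nonempty X] :
    IsUnit (1 - γ • P).det := by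
  rw [isUnit_iff_ne_zero]
  intro hdet
  obtain ⟨u, hu, hu0⟩ := (Matrix.exists_mulVec_eq_zero_iff).mpr hdet
  apply hu
  apply ker_zero hP0 hPs hγ0 hγ1
  intro x
  have := congrFun hu0 x
  rw [oneSub_mulVec] at this
  have hx : u x - γ * ∑ y, P x y * u y = 0 := this
  linarith

end Aux2

/-- value-function difference bound between two MDP models. -/
theorem value_difference_bound {X : Type*} [Fintype X] [DecidableEq X] [Nonempty X]
    (P1 P2 : Matrix X X ℝ)
    (hP1 : (∀ x y, 0 ≤ P1 x y) ∧ ∀ x, ∑ y, P1 x y = 1)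
    (hP2 : (∀ x y, 0 ≤ P2 x y) ∧ ∀ x, ∑ y, P2 x y = 1)
    (r1 r2 : X → ℝ) (γ Rmax : ℝ) (hγ : γ ∈ Set.Ioo (0:ℝ) 1)
    (hr1 : ∀ x, |r1 x| ≤ Rmax) (hr2 : ∀ x, |r2 x| ≤ Rmax)
    (e : X → ℝ) (he : ∀ x, ∑ y, |P1 x y - P2 x y| ≤ e x)
    (v1 v2 : X → ℝ)
    (hv1 : v1 = ((1 - γ • P1)⁻¹).mulVec r1)
    (hv2 : v2 = ((1 - γ • P2)⁻¹).mulVec r2) :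
    ∀ x,
      ((1 - γ • P1)⁻¹).mulVec (fun y => r1 y - r2 y - γ * Rmax / (1 - γ) * e y) x
        ≤ v1 x - v2 x
      ∧ v1 x - v2 x
        ≤ ((1 - γ • P1)⁻¹).mulVec (fun y => r1 y - r2 y + γ * Rmax / (1 - γ) * e y) x := by
  obtain ⟨hγ0, hγ1⟩ := hγ
  obtain ⟨hP10, hP1s⟩ := hP1
  obtain ⟨hP20, hP2s⟩ := hP2
  have hγ0' : (0:ℝ) ≤ γ := le_of_lt hγ0
  have hdet1 : IsUnit (1 - γ • P1).det := oneSub_det_isUnit hP10 hP1s hγ0' hγ1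
  have hdet2 : IsUnit (1 - γ • P2).det := oneSub_det_isUnit hP20 hP2s hγ0' hγ1
  -- Inverse property: applying (1 - γP) to ((1 - γP)⁻¹ g) gives g
  have hinv1 : ∀ g : X → ℝ, (1 - γ • P1).mulVec (((1 - γ • P1)⁻¹).mulVec g) = g := by
    intro g
    rw [Matrix.mulVec_mulVec, Matrix.mul_nonsing_inv _ hdet1, Matrix.one_mulVec]
  have hinv2 : ∀ g : X → ℝ, (1 - γ • P2).mulVec (((1 - γ • P2)⁻¹).mulVec g) = g := by
    intro g
    rw [Matrix.mulVec_mulVec, Matrix.mul_nonsing_inv _ hdet2, Matrix.one_mulVec]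
  -- Bellman equations
  have hbell : ∀ (P : Matrix X X ℝ) (g v : X → ℝ),
      ((1 - γ • P).mulVec v = g) → ∀ x, v x = g x + γ * ∑ y, P x y * v y := by
    intro P g v h x
    have := congrFun h x
    rw [oneSub_mulVec] at this
    linarith [this]
  have hv1' : ∀ x, v1 x = r1 x + γ * ∑ y, P1 x y * v1 y :=
    hbell P1 r1 v1 (by rw [hv1]; exact hinv1 r1)
  have hv2' : ∀ x, v2 x = r2 x + γ * ∑ y, P2 x y * v2 y :=
    hbell P2 r2 v2 (by rw [hv2]; exact hinv2 r2)
  -- bound on v2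
  have hRmax : 0 ≤ Rmax := le_trans (abs_nonneg _) (hr1 (Classical.arbitrary X))
  have hv2b : ∀ x, |v2 x| ≤ Rmax / (1 - γ) :=
    value_sup_bound hP20 hP2s hγ0' hγ1 hr2 hv2'
  -- the perturbation term
  set c : X → ℝ := fun x => r1 x - r2 x + γ * ∑ y, (P1 x y - P2 x y) * v2 y with hc
  have hd : ∀ x, v1 x - v2 x = c x + γ * ∑ y, P1 x y * (v1 y - v2 y) := by
    intro x
    have e1 : ∑ y, P1 x y * (v1 y - v2 y)
        = (∑ y, P1 x y * v1 y) - ∑ y, P1 x y * v2 y := by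
      rw [← Finset.sum_sub_distrib]; apply Finset.sum_congr rfl; intro y _; ring
    have e2 : ∑ y, (P1 x y - P2 x y) * v2 y
        = (∑ y, P1 x y * v2 y) - ∑ y, P2 x y * v2 y := by
      rw [← Finset.sum_sub_distrib]; apply Finset.sum_congr rfl; intro y _; ring
    rw [hc]
    simp only [e1, e2]
    rw [hv1' x, hv2' x]; ring
  -- bound the perturbation
  have he0 : ∀ x, 0 ≤ e x := fun x =>
    le_trans (Finset.sum_nonneg (fun y _ => abs_nonneg _)) (he x)
  have hpert : ∀ x, |γ * ∑ y, (P1 x y - P2 x y) * v2 y| ≤ γ * Rmax / (1 - γ) * e x := by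
    intro x
    rw [abs_mul, abs_of_nonneg hγ0']
    have h1 : |∑ y, (P1 x y - P2 x y) * v2 y| ≤ Rmax / (1 - γ) * e x := by
      calc |∑ y, (P1 x y - P2 x y) * v2 y| ≤ ∑ y, |(P1 x y - P2 x y) * v2 y| :=
            Finset.abs_sum_le_sum_abs _ _
        _ = ∑ y, |P1 x y - P2 x y| * |v2 y| := by
            apply Finset.sum_congr rfl; intro y _; rw [abs_mul]
        _ ≤ ∑ y, |P1 x y - P2 x y| * (Rmax / (1 - γ)) := by
            apply Finset.sum_le_sum; intro y _
            exact mul_le_mul_of_nonneg_left (hv2b y) (abs_nonneg _)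
        _ = (∑ y, |P1 x y - P2 x y|) * (Rmax / (1 - γ)) := by rw [Finset.sum_mul]
        _ ≤ e x * (Rmax / (1 - γ)) := by
            exact mul_le_mul_of_nonneg_right (he x)
              (div_nonneg hRmax (by linarith))
        _ = Rmax / (1 - γ) * e x := by ring
    calc γ * |∑ y, (P1 x y - P2 x y) * v2 y| ≤ γ * (Rmax / (1 - γ) * e x) :=
          mul_le_mul_of_nonneg_left h1 hγ0'
      _ = γ * Rmax / (1 - γ) * e x := by ring
  -- Bellman equations for the two comparison vectors
  have hgu : ∀ x, ((1 - γ • P1)⁻¹).mulVec (fun y => r1 y - r2 y + γ * Rmax / (1 - γ) * e y) x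
      = (r1 x - r2 x + γ * Rmax / (1 - γ) * e x)
        + γ * ∑ y, P1 x y * ((1 - γ • P1)⁻¹).mulVec (fun y => r1 y - r2 y + γ * Rmax / (1 - γ) * e y) y :=
    hbell P1 _ _ (hinv1 _)
  have hgl : ∀ x, ((1 - γ • P1)⁻¹).mulVec (fun y => r1 y - r2 y - γ * Rmax / (1 - γ) * e y) x
      = (r1 x - r2 x - γ * Rmax / (1 - γ) * e x)
        + γ * ∑ y, P1 x y * ((1 - γ • P1)⁻¹).mulVec (fun y => r1 y - r2 y - γ * Rmax / (1 - γ) * e y) y :=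
    hbell P1 _ _ (hinv1 _)
  intro x
  constructor
  · refine compare hP10 hP1s hγ0' hγ1 hd hgl ?_ x
    intro z
    have := hpert z
    have habs := abs_le.mp this
    rw [hc]
    simp only
    linarith [habs.1]
  · refine compare hP10 hP1s hγ0' hγ1 hgu hd ?_ x
    intro z
    have := hpert z
    have habs := abs_le.mp this
    rw [hc]
    simp only
    linarith [habs.2]
end

section
/- Fix a policy π with transition matrix P_π and rewards r_π (‖r_π‖_∞ ≤ R_max), initial distribution p0, and discount γ ∈ (0,1). If ξ is another transition matrix with ‖P_π(·|x) - ξ_π(·|x)‖_1 ≤ 2e_π(x) for all states x, then |ρ(π, P) - ρ(π, ξ)| ≤ (2γ R_max/(1-γ)) · p0ᵀ (I - γ P_π)^{-1} e_π, where ρ(π, Q) = p0ᵀ (I - γ Q_π)^{-1} r_π. -/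
open Matrix

section Aux

variable {X : Type*} [Fintype X] [DecidableEq X] [Nonempty X]

lemma aux_expand (Q : Matrix X X ℝ) (γ : ℝ) (w : X → ℝ) (x : X) :
    ((1 - γ • Q).mulVec w) x = w x - γ * ∑ y, Q x y * w y := by
  simp only [Matrix.sub_mulVec, Matrix.smul_mulVec, Matrix.one_mulVec,
    Matrix.mulVec, dotProduct, Pi.sub_apply, Pi.smul_apply, smul_eq_mul,
    Matrix.sub_apply, Matrix.smul_apply]
  rw [Finset.mul_sum]
  rw [show ∀ f g : X → ℝ, (∑ y, (f y - g y) * w y) = ∑ y, (f y * w y - g y * w y)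
    from fun f g => Finset.sum_congr rfl (fun y _ => sub_mul _ _ _),
    Finset.sum_sub_distrib]
  congr 1
  · simp [Matrix.one_apply, ite_mul]
  · exact Finset.sum_congr rfl (fun y _ => mul_assoc _ _ _)

lemma aux_det_unit (Q : Matrix X X ℝ) (hQ0 : ∀ x y, 0 ≤ Q x y)
    (hQ1 : ∀ x, ∑ y, Q x y = 1) {γ : ℝ} (hγ0 : 0 ≤ γ) (hγ1 : γ < 1) :
    IsUnit (1 - γ • Q).det := by
  rw [isUnit_iff_ne_zero]
  intro h
  obtain ⟨v, hv, hveq⟩ := (Matrix.exists_mulVec_eq_zero_iff).mpr h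
  obtain ⟨x0, -, hx0⟩ := Finset.exists_max_image Finset.univ (fun x => |v x|)
    Finset.univ_nonempty
  have hcomp : v x0 = γ * ∑ y, Q x0 y * v y := by
    have h1 := congrFun hveq x0
    rw [aux_expand] at h1
    have h2 : v x0 - γ * ∑ y, Q x0 y * v y = 0 := h1
    linarith
  have hb : |v x0| ≤ γ * |v x0| := by
    calc |v x0| = γ * |∑ y, Q x0 y * v y| := by
          rw [hcomp, abs_mul, abs_of_nonneg hγ0]
      _ ≤ γ * ∑ y, Q x0 y * |v x0| := by
          apply mul_le_mul_of_nonneg_left _ hγ0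
          refine (Finset.abs_sum_le_sum_abs _ _).trans ?_
          apply Finset.sum_le_sum
          intro y _
          rw [abs_mul, abs_of_nonneg (hQ0 x0 y)]
          exact mul_le_mul_of_nonneg_left (hx0 y (Finset.mem_univ y)) (hQ0 x0 y)
      _ = γ * |v x0| := by rw [← Finset.sum_mul, hQ1 x0, one_mul]
  have hzero : |v x0| = 0 := by nlinarith [abs_nonneg (v x0)]
  apply hv
  funext x
  have hx := hx0 x (Finset.mem_univ x)
  rw [hzero] at hx
  simpa using le_antisymm hx (abs_nonneg _)

lemma aux_fixed (Q : Matrix X X ℝ) (hQ0 : ∀ x y, 0 ≤ Q x y)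
    (hQ1 : ∀ x, ∑ y, Q x y = 1) {γ : ℝ} (hγ0 : 0 ≤ γ) (hγ1 : γ < 1)
    (u : X → ℝ) (x : X) :
    ((1 - γ • Q)⁻¹).mulVec u x = u x + γ * ∑ y, Q x y * ((1 - γ • Q)⁻¹).mulVec u y := by
  have h1 : (1 - γ • Q).mulVec (((1 - γ • Q)⁻¹).mulVec u) = u := by
    rw [Matrix.mulVec_mulVec, Matrix.mul_nonsing_inv _ (aux_det_unit Q hQ0 hQ1 hγ0 hγ1),
      Matrix.one_mulVec]
  have h2 := congrFun h1 x
  rw [aux_expand] at h2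
  linarith [h2]

lemma aux_nonneg (Q : Matrix X X ℝ) (hQ0 : ∀ x y, 0 ≤ Q x y)
    (hQ1 : ∀ x, ∑ y, Q x y = 1) {γ : ℝ} (hγ0 : 0 ≤ γ) (hγ1 : γ < 1)
    (u : X → ℝ) (hu : ∀ x, 0 ≤ u x) (x : X) :
    0 ≤ ((1 - γ • Q)⁻¹).mulVec u x := by
  obtain ⟨x0, -, hx0⟩ := Finset.exists_min_image Finset.univ
    (fun x => ((1 - γ • Q)⁻¹).mulVec u x) Finset.univ_nonempty
  have hfix := aux_fixed Q hQ0 hQ1 hγ0 hγ1 u x0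
  have hsum : ((1 - γ • Q)⁻¹).mulVec u x0 * 1 ≤ ∑ y, Q x0 y * ((1 - γ • Q)⁻¹).mulVec u y := by
    rw [← hQ1 x0, Finset.mul_sum]
    apply Finset.sum_le_sum
    intro y _
    rw [mul_comm (((1 - γ • Q)⁻¹).mulVec u x0)]
    exact mul_le_mul_of_nonneg_left (hx0 y (Finset.mem_univ y)) (hQ0 x0 y)
  have h0 : 0 ≤ ((1 - γ • Q)⁻¹).mulVec u x0 := by
    nlinarith [hu x0, mul_le_mul_of_nonneg_left hsum hγ0]
  exact h0.trans (hx0 x (Finset.mem_univ x))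

lemma aux_sup (Q : Matrix X X ℝ) (hQ0 : ∀ x y, 0 ≤ Q x y)
    (hQ1 : ∀ x, ∑ y, Q x y = 1) {γ : ℝ} (hγ0 : 0 ≤ γ) (hγ1 : γ < 1)
    (r : X → ℝ) (Rmax : ℝ) (hr : ∀ x, |r x| ≤ Rmax) (x : X) :
    |((1 - γ • Q)⁻¹).mulVec r x| ≤ Rmax / (1 - γ) := by
  obtain ⟨x0, -, hx0⟩ := Finset.exists_max_image Finset.univ
    (fun x => |((1 - γ • Q)⁻¹).mulVec r x|) Finset.univ_nonempty
  have hfix := aux_fixed Q hQ0 hQ1 hγ0 hγ1 r x0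
  have hb : |((1 - γ • Q)⁻¹).mulVec r x0| ≤ Rmax + γ * |((1 - γ • Q)⁻¹).mulVec r x0| := by
    conv_lhs => rw [hfix]
    refine (abs_add_le _ _).trans ?_
    apply add_le_add (hr x0)
    rw [abs_mul, abs_of_nonneg hγ0]
    apply mul_le_mul_of_nonneg_left _ hγ0
    refine (Finset.abs_sum_le_sum_abs _ _).trans ?_
    calc ∑ y, |Q x0 y * ((1 - γ • Q)⁻¹).mulVec r y|
        ≤ ∑ y, Q x0 y * |((1 - γ • Q)⁻¹).mulVec r x0| := by
          apply Finset.sum_le_sum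
          intro y _
          rw [abs_mul, abs_of_nonneg (hQ0 x0 y)]
          exact mul_le_mul_of_nonneg_left (hx0 y (Finset.mem_univ y)) (hQ0 x0 y)
      _ = |((1 - γ • Q)⁻¹).mulVec r x0| := by rw [← Finset.sum_mul, hQ1 x0, one_mul]
  have h1γ : (0:ℝ) < 1 - γ := by linarith
  have hx := hx0 x (Finset.mem_univ x)
  rw [le_div_iff₀ h1γ]
  nlinarith

end Aux

/-- simulation lemma — return difference of a fixed policy
under two transition models within `2 e` in ℓ1 distance. -/
theorem return_difference_bound {X : Type*} [Fintype X] [DecidableEq X] [Nonempty X]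
    (Pπ ξπ : Matrix X X ℝ)
    (hP : (∀ x y, 0 ≤ Pπ x y) ∧ ∀ x, ∑ y, Pπ x y = 1)
    (hξ : (∀ x y, 0 ≤ ξπ x y) ∧ ∀ x, ∑ y, ξπ x y = 1)
    (rπ : X → ℝ) (γ Rmax : ℝ) (hγ : γ ∈ Set.Ioo (0:ℝ) 1) (hR : 0 ≤ Rmax)
    (hr : ∀ x, |rπ x| ≤ Rmax)
    (p0 : X → ℝ) (hp0 : (∀ x, 0 ≤ p0 x) ∧ ∑ x, p0 x = 1)
    (eπ : X → ℝ) (he : ∀ x, 0 ≤ eπ x)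
    (hdist : ∀ x, ∑ y, |Pπ x y - ξπ x y| ≤ 2 * eπ x) :
    |p0 ⬝ᵥ ((1 - γ • Pπ)⁻¹).mulVec rπ - p0 ⬝ᵥ ((1 - γ • ξπ)⁻¹).mulVec rπ|
      ≤ 2 * γ * Rmax / (1 - γ) * (p0 ⬝ᵥ ((1 - γ • Pπ)⁻¹).mulVec eπ) := by
  obtain ⟨hγ0, hγ1⟩ := hγ
  have hγ0' := hγ0.le
  have h1γ : (0:ℝ) < 1 - γ := by linarith
  obtain ⟨hP0, hP1⟩ := hP
  obtain ⟨hξ0, hξ1⟩ := hξ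
  set A := (1 - γ • Pπ)⁻¹ with hA
  set B := (1 - γ • ξπ)⁻¹ with hB
  set v := B.mulVec rπ with hv
  set u := γ • (Pπ - ξπ).mulVec v with hu
  have hdetP := aux_det_unit Pπ hP0 hP1 hγ0' hγ1
  have hdetξ := aux_det_unit ξπ hξ0 hξ1 hγ0' hγ1
  have hAinv : ∀ z : X → ℝ, A.mulVec ((1 - γ • Pπ).mulVec z) = z := by
    intro z
    rw [hA, Matrix.mulVec_mulVec, Matrix.nonsing_inv_mul _ hdetP, Matrix.one_mulVec]
  have h3 : (1 - γ • ξπ).mulVec v = rπ := by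
    rw [hv, hB, Matrix.mulVec_mulVec, Matrix.mul_nonsing_inv _ hdetξ, Matrix.one_mulVec]
  have hM : (1 - γ • Pπ) = (1 - γ • ξπ) - γ • (Pπ - ξπ) := by
    rw [smul_sub]; abel
  have h2 : (1 - γ • Pπ).mulVec v = rπ - u := by
    rw [hM, Matrix.sub_mulVec, h3, hu, Matrix.smul_mulVec]
  have hveq2 : v = A.mulVec (rπ - u) := by rw [← h2, hAinv v]
  have hid : A.mulVec rπ - B.mulVec rπ = A.mulVec u := by
    rw [← hv, hveq2, Matrix.mulVec_sub]
    abel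
  -- pointwise bound on u
  have hvbound : ∀ x, |v x| ≤ Rmax / (1 - γ) := by
    intro x
    rw [hv, hB]
    exact aux_sup ξπ hξ0 hξ1 hγ0' hγ1 rπ Rmax hr x
  set c : X → ℝ := fun x => γ * (2 * (Rmax / (1 - γ)) * eπ x) with hc
  have hub : ∀ x, |u x| ≤ c x := by
    intro x
    rw [hu]
    simp only [Pi.smul_apply, smul_eq_mul, hc]
    rw [abs_mul, abs_of_nonneg hγ0']
    apply mul_le_mul_of_nonneg_left _ hγ0'
    calc |(Pπ - ξπ).mulVec v x| ≤ ∑ y, |Pπ x y - ξπ x y| * (Rmax / (1 - γ)) := by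
          refine (Finset.abs_sum_le_sum_abs _ _).trans ?_
          apply Finset.sum_le_sum
          intro y _
          simp only [Matrix.sub_apply]
          rw [abs_mul]
          exact mul_le_mul_of_nonneg_left (hvbound y) (abs_nonneg _)
      _ = (∑ y, |Pπ x y - ξπ x y|) * (Rmax / (1 - γ)) := by rw [Finset.sum_mul]
      _ ≤ 2 * eπ x * (Rmax / (1 - γ)) := by
          apply mul_le_mul_of_nonneg_right (hdist x)
          positivity
      _ = 2 * (Rmax / (1 - γ)) * eπ x := by ring
  have hcnn : ∀ x, 0 ≤ c x := fun x => (abs_nonneg _).trans (hub x)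
  -- componentwise: |A.mulVec u x| ≤ A.mulVec c x
  have hcomp : ∀ x, |A.mulVec u x| ≤ A.mulVec c x := by
    intro x
    rw [abs_le]
    constructor
    · have hnn := aux_nonneg Pπ hP0 hP1 hγ0' hγ1 (c + u)
        (fun y => by
          have := (abs_le.mp (hub y)).1
          simp only [Pi.add_apply]
          linarith) x
      rw [← hA, Matrix.mulVec_add, Pi.add_apply] at hnn
      linarith
    · have hnn := aux_nonneg Pπ hP0 hP1 hγ0' hγ1 (c - u)
        (fun y => by
          have := (abs_le.mp (hub y)).2
          simp only [Pi.sub_apply]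
          linarith) x
      rw [← hA, Matrix.mulVec_sub, Pi.sub_apply] at hnn
      linarith
  have hfin : |p0 ⬝ᵥ A.mulVec u| ≤ p0 ⬝ᵥ A.mulVec c := by
    rw [dotProduct, dotProduct]
    refine (Finset.abs_sum_le_sum_abs _ _).trans ?_
    apply Finset.sum_le_sum
    intro x _
    rw [abs_mul, abs_of_nonneg (hp0.1 x)]
    exact mul_le_mul_of_nonneg_left (hcomp x) (hp0.1 x)
  have hcA : p0 ⬝ᵥ A.mulVec c = 2 * γ * Rmax / (1 - γ) * (p0 ⬝ᵥ A.mulVec eπ) := by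
    have hce : c = (2 * γ * Rmax / (1 - γ)) • eπ := by
      funext x
      simp only [hc, Pi.smul_apply, smul_eq_mul]
      ring
    rw [hce, Matrix.mulVec_smul, dotProduct_smul, smul_eq_mul]
  calc |p0 ⬝ᵥ A.mulVec rπ - p0 ⬝ᵥ B.mulVec rπ| = |p0 ⬝ᵥ A.mulVec u| := by
        rw [← dotProduct_sub, hid]
    _ ≤ p0 ⬝ᵥ A.mulVec c := hfin
    _ = 2 * γ * Rmax / (1 - γ) * (p0 ⬝ᵥ A.mulVec eπ) := hcA
end

section
/- Suppose the true model P* lies in the uncertainty set Ξ, and π_S maximizes min_{ξ∈Ξ}(ρ(π,ξ) - ρ(π_B,ξ)). Then the performance loss of π_S satisfies ρ(π*, P*) - ρ(π_S, P*) ≤ max_{ξ∈Ξ}(ρ(π*,P*) - ρ(π*,ξ)) + max_{ξ∈Ξ}(ρ(π_B,ξ) - ρ(π_B,P*)), where π* is an optimal policy for P*. -/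
/-- performance-loss decomposition for a robust baseline-regret maximizer. -/
theorem regret_maximizer_performance_loss {Pol Mdl : Type*}
    [Fintype Pol] [Fintype Mdl] [Nonempty Pol] [Nonempty Mdl]
    (ρ : Pol → Mdl → ℝ) (πB πstar πS : Pol) (Pstar : Mdl)
    (hopt : ∀ π : Pol, ρ π Pstar ≤ ρ πstar Pstar)
    (hmax : ∀ π : Pol, (⨅ ξ : Mdl, (ρ π ξ - ρ πB ξ)) ≤ ⨅ ξ : Mdl, (ρ πS ξ - ρ πB ξ)) :
    ρ πstar Pstar - ρ πS Pstar
      ≤ (⨆ ξ : Mdl, (ρ πstar Pstar - ρ πstar ξ)) + ⨆ ξ : Mdl, (ρ πB ξ - ρ πB Pstar) := by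
  have h1 : (⨅ ξ : Mdl, (ρ πS ξ - ρ πB ξ)) ≤ ρ πS Pstar - ρ πB Pstar :=
    ciInf_le (Set.Finite.bddBelow (Set.finite_range _)) Pstar
  have h2 : ∀ ξ : Mdl, ρ πstar Pstar - ρ πstar ξ ≤ ⨆ ξ : Mdl, (ρ πstar Pstar - ρ πstar ξ) :=
    fun ξ => le_ciSup (f := fun m : Mdl => ρ πstar Pstar - ρ πstar m) (Set.Finite.bddAbove (Set.finite_range _)) ξ
  have h3 : ∀ ξ : Mdl, ρ πB ξ - ρ πB Pstar ≤ ⨆ ξ : Mdl, (ρ πB ξ - ρ πB Pstar) :=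
    fun ξ => le_ciSup (f := fun m : Mdl => ρ πB m - ρ πB Pstar) (Set.Finite.bddAbove (Set.finite_range _)) ξ
  have h4 : (ρ πstar Pstar - ρ πB Pstar)
      - ((⨆ ξ : Mdl, (ρ πstar Pstar - ρ πstar ξ)) + ⨆ ξ : Mdl, (ρ πB ξ - ρ πB Pstar))
      ≤ ⨅ ξ : Mdl, (ρ πstar ξ - ρ πB ξ) := by
    apply le_ciInf
    intro ξ
    have := h2 ξ
    have := h3 ξ
    linarith
  have h5 := hmax πstar
  linarith
end

section
/- Let π_sim be an optimal policy of the MDP with approximate transitions P̂. Under the assumption that ‖P*(·|x,a) - P̂(·|x,a)‖_1 ≤ e(x,a) for all (x,a), the performance loss of π_sim in the true MDP satisfies ρ(π*,P*) - ρ(π_sim,P*) ≤ (2γR_max/(1-γ)²)·‖e‖_∞. -/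
open Matrix

/-- Return of a deterministic policy `π` in the MDP with transition kernel `Q`,
rewards `r`, discount `γ` and initial distribution `p0`. -/
noncomputable def mdpReturn {X A : Type*} [Fintype X] [DecidableEq X]
    (γ : ℝ) (p0 : X → ℝ) (r : X → A → ℝ) (π : X → A) (Q : X → A → X → ℝ) : ℝ :=
  p0 ⬝ᵥ ((1 - γ • Matrix.of (fun x y => Q x (π x) y))⁻¹).mulVec (fun x => r x (π x))


section helpers
variable {X : Type*} [Fintype X] [DecidableEq X] [Nonempty X]

lemma stoch_isUnit (γ : ℝ) (hγ0 : 0 ≤ γ) (hγ1 : γ < 1) (P : Matrix X X ℝ)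
    (habs : ∀ x, ∑ y, |P x y| ≤ 1) : IsUnit (1 - γ • P) := by
  rw [← Matrix.mulVec_injective_iff_isUnit]
  intro v w hvw
  set d := v - w with hd
  have hker : (1 - γ • P).mulVec d = 0 := by
    simp [hd, Matrix.mulVec_sub, hvw]
  have hfix : ∀ x, d x = γ * ∑ y, P x y * d y := by
    intro x
    have h : (1 : Matrix X X ℝ).mulVec d - (γ • P).mulVec d = 0 := by
      rw [← Matrix.sub_mulVec]; exact hker
    have h2 := congrFun h x
    simp only [Pi.sub_apply, Pi.zero_apply, Matrix.one_mulVec, Matrix.smul_mulVec,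
      Pi.smul_apply, smul_eq_mul, sub_eq_zero, Matrix.mulVec, dotProduct] at h2
    exact h2
  -- max of |d|
  obtain ⟨x0, _, hx0⟩ := Finset.exists_mem_eq_sup' (Finset.univ_nonempty) (fun x => |d x|)
  set M := Finset.univ.sup' Finset.univ_nonempty (fun x => |d x|) with hM
  have hle : ∀ x, |d x| ≤ M := fun x => Finset.le_sup' (fun x => |d x|) (Finset.mem_univ x)
  have hMle : M ≤ γ * M := by
    calc M = |d x0| := hx0
    _ = γ * |∑ y, P x0 y * d y| := by rw [hfix x0, abs_mul, abs_of_nonneg hγ0]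
    _ ≤ γ * ∑ y, |P x0 y| * M := by
        refine mul_le_mul_of_nonneg_left ?_ hγ0
        refine (Finset.abs_sum_le_sum_abs _ _).trans ?_
        refine Finset.sum_le_sum fun y _ => ?_
        rw [abs_mul]
        exact mul_le_mul_of_nonneg_left (hle y) (abs_nonneg _)
    _ ≤ γ * M := by
        refine mul_le_mul_of_nonneg_left ?_ hγ0
        have hM0 : 0 ≤ M := le_trans (abs_nonneg _) (hle (Classical.arbitrary X))
        calc ∑ y, |P x0 y| * M = (∑ y, |P x0 y|) * M := by rw [Finset.sum_mul]
        _ ≤ 1 * M := mul_le_mul_of_nonneg_right (habs x0) hM0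
        _ = M := one_mul M
  have hM0 : M ≤ 0 := by nlinarith [le_trans (abs_nonneg (d (Classical.arbitrary X))) (hle (Classical.arbitrary X))]
  funext x
  have hdx : d x = 0 := abs_nonpos_iff.mp (le_trans (hle x) hM0)
  have : v x - w x = 0 := hdx
  linarith

end helpers

section sim
variable {X : Type*} [Fintype X] [DecidableEq X] [Nonempty X]

lemma sim_lemma (γ Rmax : ℝ) (hγ0 : 0 < γ) (hγ1 : γ < 1) (hR : 0 ≤ Rmax)
    (p0 : X → ℝ) (hp0 : ∑ x, |p0 x| ≤ 1)
    (rv : X → ℝ) (hrv : ∀ x, |rv x| ≤ Rmax)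
    (P Q : Matrix X X ℝ)
    (hPn : ∀ x y, 0 ≤ P x y) (hPs : ∀ x, ∑ y, P x y = 1)
    (hQn : ∀ x y, 0 ≤ Q x y) (hQs : ∀ x, ∑ y, Q x y = 1)
    (E : ℝ) (hE0 : 0 ≤ E) (hE : ∀ x, ∑ y, |P x y - Q x y| ≤ E) :
    p0 ⬝ᵥ (1 - γ • P)⁻¹.mulVec rv - p0 ⬝ᵥ (1 - γ • Q)⁻¹.mulVec rv
      ≤ γ * Rmax / (1 - γ)^2 * E := by
  have hγ0' : (0:ℝ) ≤ γ := le_of_lt hγ0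
  have h1γ : (0:ℝ) < 1 - γ := by linarith
  have habsP : ∀ x, ∑ y, |P x y| ≤ 1 := fun x => by
    rw [show ∑ y, |P x y| = ∑ y, P x y from Finset.sum_congr rfl fun y _ => abs_of_nonneg (hPn x y), hPs x]
  have habsQ : ∀ x, ∑ y, |Q x y| ≤ 1 := fun x => by
    rw [show ∑ y, |Q x y| = ∑ y, Q x y from Finset.sum_congr rfl fun y _ => abs_of_nonneg (hQn x y), hQs x]
  set A : Matrix X X ℝ := 1 - γ • P with hAdef
  set B : Matrix X X ℝ := 1 - γ • Q with hBdef
  have hA : IsUnit A := stoch_isUnit γ hγ0' hγ1 P habsP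
  have hB : IsUnit B := stoch_isUnit γ hγ0' hγ1 Q habsQ
  have hAd : IsUnit A.det := (Matrix.isUnit_iff_isUnit_det A).mp hA
  have hBd : IsUnit B.det := (Matrix.isUnit_iff_isUnit_det B).mp hB
  have hdiff : A⁻¹ - B⁻¹ = A⁻¹ * (γ • (P - Q)) * B⁻¹ := by
    have hBA : γ • (P - Q) = B - A := by rw [hAdef, hBdef, smul_sub]; abel
    rw [hBA, Matrix.mul_sub, Matrix.sub_mul, Matrix.mul_assoc,
      Matrix.mul_nonsing_inv B hBd, Matrix.mul_one, Matrix.nonsing_inv_mul A hAd,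
      Matrix.one_mul]
  set u : X → ℝ := Matrix.vecMul p0 A⁻¹ with hu
  set v : X → ℝ := B⁻¹.mulVec rv with hv
  -- value bound on v
  have hBv : B.mulVec v = rv := by
    rw [hv, Matrix.mulVec_mulVec, Matrix.mul_nonsing_inv B hBd, Matrix.one_mulVec]
  have hvfix : ∀ x, v x = rv x + γ * ∑ y, Q x y * v y := by
    intro x
    have h := congrFun hBv x
    have h2 : (1 : Matrix X X ℝ).mulVec v x - (γ • Q).mulVec v x = rv x := by
      rw [← Pi.sub_apply, ← Matrix.sub_mulVec]; exact h
    simp only [Matrix.mulVec, dotProduct] at h2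
    have h3 : ∑ y, (1 : Matrix X X ℝ) x y * v y = v x := by simp [Matrix.one_apply]
    have h4 : ∑ y, (γ • Q) x y * v y = γ * ∑ y, Q x y * v y := by
      simp [Matrix.smul_apply, Finset.mul_sum, mul_assoc]
    rw [h3, h4] at h2; linarith
  have hvbound : ∀ x, |v x| ≤ Rmax / (1 - γ) := by
    obtain ⟨x0, _, hx0⟩ := Finset.exists_mem_eq_sup' (Finset.univ_nonempty) (fun x => |v x|)
    set V := Finset.univ.sup' Finset.univ_nonempty (fun x => |v x|) with hV
    have hle : ∀ x, |v x| ≤ V := fun x => Finset.le_sup' (fun x => |v x|) (Finset.mem_univ x)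
    have hVb : V ≤ Rmax + γ * V := by
      calc V = |v x0| := hx0
      _ = |rv x0 + γ * ∑ y, Q x0 y * v y| := by rw [hvfix x0]
      _ ≤ |rv x0| + |γ * ∑ y, Q x0 y * v y| := abs_add_le _ _
      _ = |rv x0| + γ * |∑ y, Q x0 y * v y| := by rw [abs_mul, abs_of_nonneg hγ0']
      _ ≤ Rmax + γ * V := by
          refine add_le_add (hrv x0) (mul_le_mul_of_nonneg_left ?_ hγ0')
          refine (Finset.abs_sum_le_sum_abs _ _).trans ?_
          calc ∑ y, |Q x0 y * v y| ≤ ∑ y, Q x0 y * V := by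
                refine Finset.sum_le_sum fun y _ => ?_
                rw [abs_mul, abs_of_nonneg (hQn x0 y)]
                exact mul_le_mul_of_nonneg_left (hle y) (hQn x0 y)
          _ = V := by rw [← Finset.sum_mul, hQs x0, one_mul]
    intro x
    refine (hle x).trans ?_
    rw [le_div_iff₀ h1γ]; nlinarith
  -- ℓ1 bound on u
  have huA : Matrix.vecMul u A = p0 := by
    rw [hu, Matrix.vecMul_vecMul, Matrix.nonsing_inv_mul A hAd, Matrix.vecMul_one]
  have hufix : ∀ y, u y = p0 y + γ * ∑ x, u x * P x y := by
    intro y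
    have h := congrFun huA y
    have h2 : Matrix.vecMul u (1 : Matrix X X ℝ) y - Matrix.vecMul u (γ • P) y = p0 y := by
      rw [← Pi.sub_apply, ← Matrix.vecMul_sub]
      exact h
    simp only [Matrix.vecMul, dotProduct] at h2
    have h3 : ∑ x, u x * (1 : Matrix X X ℝ) x y = u y := by simp [Matrix.one_apply]
    have h4 : ∑ x, u x * (γ • P) x y = γ * ∑ x, u x * P x y := by
      simp [Matrix.smul_apply, smul_eq_mul, Finset.mul_sum, mul_left_comm]
    rw [h3, h4] at h2; linarith
  have hubound : ∑ x, |u x| ≤ 1 / (1 - γ) := by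
    have hS : ∑ x, |u x| ≤ 1 + γ * ∑ x, |u x| := by
      calc ∑ y, |u y| = ∑ y, |p0 y + γ * ∑ x, u x * P x y| :=
            Finset.sum_congr rfl fun y _ => by rw [hufix y]
      _ ≤ ∑ y, (|p0 y| + γ * |∑ x, u x * P x y|) := by
            refine Finset.sum_le_sum fun y _ => ?_
            calc |p0 y + γ * ∑ x, u x * P x y|
                ≤ |p0 y| + |γ * ∑ x, u x * P x y| := abs_add_le _ _
            _ = |p0 y| + γ * |∑ x, u x * P x y| := by rw [abs_mul, abs_of_nonneg hγ0']
      _ = (∑ y, |p0 y|) + γ * ∑ y, |∑ x, u x * P x y| := by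
            rw [Finset.sum_add_distrib, Finset.mul_sum]
      _ ≤ 1 + γ * ∑ y, ∑ x, |u x| * P x y := by
            refine add_le_add hp0 (mul_le_mul_of_nonneg_left ?_ hγ0')
            refine Finset.sum_le_sum fun y _ => ?_
            refine (Finset.abs_sum_le_sum_abs _ _).trans ?_
            refine Finset.sum_le_sum fun x _ => ?_
            rw [abs_mul, abs_of_nonneg (hPn x y)]
      _ = 1 + γ * ∑ x, |u x| := by
            rw [Finset.sum_comm]
            congr 1
            congr 1
            refine Finset.sum_congr rfl fun x _ => ?_
            rw [← Finset.mul_sum, hPs x, mul_one]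
    rw [le_div_iff₀ h1γ]; nlinarith
  -- main decomposition
  have hmain : p0 ⬝ᵥ A⁻¹.mulVec rv - p0 ⬝ᵥ B⁻¹.mulVec rv
      = γ * (u ⬝ᵥ (P - Q).mulVec v) := by
    rw [← dotProduct_sub, ← Matrix.sub_mulVec, hdiff]
    rw [← Matrix.mulVec_mulVec, ← Matrix.mulVec_mulVec]
    rw [Matrix.dotProduct_mulVec, ← hu, ← hv]
    rw [Matrix.smul_mulVec, dotProduct_smul, smul_eq_mul]
  rw [hmain]
  have hterm : ∀ x, |((P - Q).mulVec v) x| ≤ E * (Rmax / (1 - γ)) := by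
    intro x
    have : ((P - Q).mulVec v) x = ∑ y, (P x y - Q x y) * v y := by
      simp [Matrix.mulVec, dotProduct, Matrix.sub_apply]
    rw [this]
    refine (Finset.abs_sum_le_sum_abs _ _).trans ?_
    calc ∑ y, |(P x y - Q x y) * v y| ≤ ∑ y, |P x y - Q x y| * (Rmax / (1 - γ)) := by
          refine Finset.sum_le_sum fun y _ => ?_
          rw [abs_mul]
          exact mul_le_mul_of_nonneg_left (hvbound y) (abs_nonneg _)
    _ = (∑ y, |P x y - Q x y|) * (Rmax / (1 - γ)) := by rw [Finset.sum_mul]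
    _ ≤ E * (Rmax / (1 - γ)) := by
          refine mul_le_mul_of_nonneg_right (hE x) ?_
          positivity
  have hdot : u ⬝ᵥ (P - Q).mulVec v ≤ (1 / (1 - γ)) * (E * (Rmax / (1 - γ))) := by
    calc u ⬝ᵥ (P - Q).mulVec v ≤ ∑ x, |u x * ((P - Q).mulVec v) x| := by
          refine Finset.sum_le_sum fun x _ => le_abs_self _
    _ ≤ ∑ x, |u x| * (E * (Rmax / (1 - γ))) := by
          refine Finset.sum_le_sum fun x _ => ?_
          rw [abs_mul]
          exact mul_le_mul_of_nonneg_left (hterm x) (abs_nonneg _)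
    _ = (∑ x, |u x|) * (E * (Rmax / (1 - γ))) := by rw [Finset.sum_mul]
    _ ≤ (1 / (1 - γ)) * (E * (Rmax / (1 - γ))) := by
          refine mul_le_mul_of_nonneg_right hubound ?_
          positivity
  calc γ * (u ⬝ᵥ (P - Q).mulVec v)
      ≤ γ * ((1 / (1 - γ)) * (E * (Rmax / (1 - γ)))) :=
        mul_le_mul_of_nonneg_left hdot hγ0'
  _ = γ * Rmax / (1 - γ) ^ 2 * E := by
        field_simp

end sim

/-- performance loss of the policy optimal in the simulator. -/
theorem simulator_performance_loss {X A : Type*} [Fintype X] [Fintype A]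
    [DecidableEq X] [Nonempty X] [Nonempty A]
    (γ Rmax : ℝ) (hγ : γ ∈ Set.Ioo (0:ℝ) 1) (hR : 0 ≤ Rmax)
    (p0 : X → ℝ) (hp0 : (∀ x, 0 ≤ p0 x) ∧ ∑ x, p0 x = 1)
    (r : X → A → ℝ) (hr : ∀ x a, |r x a| ≤ Rmax)
    (Pstar Phat : X → A → X → ℝ)
    (hPstar : (∀ x a y, 0 ≤ Pstar x a y) ∧ ∀ x a, ∑ y, Pstar x a y = 1)
    (hPhat : (∀ x a y, 0 ≤ Phat x a y) ∧ ∀ x a, ∑ y, Phat x a y = 1)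
    (e : X → A → ℝ) (he : ∀ x a, 0 ≤ e x a)
    (hdist : ∀ x a, ∑ y, |Pstar x a y - Phat x a y| ≤ e x a)
    (πstar πsim : X → A)
    (hπstar : ∀ π : X → A, mdpReturn γ p0 r π Pstar ≤ mdpReturn γ p0 r πstar Pstar)
    (hπsim : ∀ π : X → A, mdpReturn γ p0 r π Phat ≤ mdpReturn γ p0 r πsim Phat) :
    mdpReturn γ p0 r πstar Pstar - mdpReturn γ p0 r πsim Pstar
      ≤ 2 * γ * Rmax / (1 - γ) ^ 2 * ⨆ q : X × A, e q.1 q.2 := by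
  obtain ⟨hγ0, hγ1⟩ := hγ
  set E := ⨆ q : X × A, e q.1 q.2 with hE
  have hbdd : BddAbove (Set.range fun q : X × A => e q.1 q.2) :=
    Set.Finite.bddAbove (Set.finite_range _)
  have hEub : ∀ x a, e x a ≤ E := fun x a => le_ciSup hbdd (x, a)
  have hE0 : 0 ≤ E := le_trans (he _ _) (hEub (Classical.arbitrary X) (Classical.arbitrary A))
  have hp0abs : ∑ x, |p0 x| ≤ 1 := by
    rw [show ∑ x, |p0 x| = ∑ x, p0 x from
      Finset.sum_congr rfl fun x _ => abs_of_nonneg (hp0.1 x), hp0.2]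
  have key : ∀ π : X → A,
      |mdpReturn γ p0 r π Pstar - mdpReturn γ p0 r π Phat| ≤ γ * Rmax / (1 - γ) ^ 2 * E := by
    intro π
    rw [abs_le]
    constructor
    · have := sim_lemma γ Rmax hγ0 hγ1 hR p0 hp0abs (fun x => r x (π x))
        (fun x => hr x (π x))
        (Matrix.of fun x y => Phat x (π x) y) (Matrix.of fun x y => Pstar x (π x) y)
        (fun x y => hPhat.1 x (π x) y) (fun x => hPhat.2 x (π x))
        (fun x y => hPstar.1 x (π x) y) (fun x => hPstar.2 x (π x))
        E hE0 (fun x => by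
          refine le_trans (le_of_eq ?_) ((hdist x (π x)).trans (hEub x (π x)))
          exact Finset.sum_congr rfl fun y _ => by
            simp [Matrix.of_apply, abs_sub_comm])
      simp only [mdpReturn]
      linarith
    · have := sim_lemma γ Rmax hγ0 hγ1 hR p0 hp0abs (fun x => r x (π x))
        (fun x => hr x (π x))
        (Matrix.of fun x y => Pstar x (π x) y) (Matrix.of fun x y => Phat x (π x) y)
        (fun x y => hPstar.1 x (π x) y) (fun x => hPstar.2 x (π x))
        (fun x y => hPhat.1 x (π x) y) (fun x => hPhat.2 x (π x))
        E hE0 (fun x => (hdist x (π x)).trans (hEub x (π x)))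
      simp only [mdpReturn]
      linarith
  have k1 := (abs_le.mp (key πstar)).2
  have k2 := (abs_le.mp (key πsim)).1
  have k3 := hπsim πstar
  have hring : 2 * γ * Rmax / (1 - γ) ^ 2 * E
      = γ * Rmax / (1 - γ) ^ 2 * E + γ * Rmax / (1 - γ) ^ 2 * E := by ring
  linarith
end

section
/- For any policy π, the reward-adjusted return is a lower bound on robust return: min_{ξ∈Ξ(P̂,e)} ρ(π, ξ) ≥ ρ(π, ξ̃), where ξ̃ has transitions P̂ and rewards r̂(x,a) = r(x,a) - (γR_max/(1-γ)) e(x,a). -/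
open Matrix

/-- If `W = γ P W + w` pointwise with `P` row-stochastic nonnegative, `0 ≤ γ < 1`
and `w ≥ 0`, then `W ≥ 0`. -/
lemma nonneg_of_fixpoint {X : Type*} [Fintype X] [Nonempty X]
    {γ : ℝ} (hγ0 : 0 ≤ γ) (hγ1 : γ < 1)
    {P : Matrix X X ℝ} (hP : ∀ x y, 0 ≤ P x y) (hrow : ∀ x, ∑ y, P x y = 1)
    {W w : X → ℝ} (hw : ∀ x, 0 ≤ w x)
    (h : ∀ x, W x = γ * P.mulVec W x + w x) : ∀ x, 0 ≤ W x := by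
  obtain ⟨x0, -, hx0⟩ := Finset.exists_min_image Finset.univ W
    ⟨Classical.arbitrary X, Finset.mem_univ _⟩
  have hmin : ∀ y, W x0 ≤ W y := fun y => hx0 y (Finset.mem_univ y)
  have hPW : W x0 ≤ P.mulVec W x0 := by
    have h1 : W x0 = ∑ y, P x0 y * W x0 := by rw [← Finset.sum_mul, hrow, one_mul]
    have h2 : ∑ y, P x0 y * W x0 ≤ ∑ y, P x0 y * W y :=
      Finset.sum_le_sum fun y _ => mul_le_mul_of_nonneg_left (hmin y) (hP x0 y)
    calc W x0 = ∑ y, P x0 y * W x0 := h1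
    _ ≤ ∑ y, P x0 y * W y := h2
    _ = P.mulVec W x0 := by simp [Matrix.mulVec, dotProduct]
  have hx0nn : 0 ≤ W x0 := by nlinarith [h x0, hw x0]
  exact fun x => hx0nn.trans (hmin x)

/-- `1 - γ • P` is invertible for a row-stochastic nonnegative `P` and `0 ≤ γ < 1`. -/
lemma isUnit_det_one_sub_smul {X : Type*} [Fintype X] [DecidableEq X]
    {γ : ℝ} (hγ0 : 0 ≤ γ) (hγ1 : γ < 1)
    {P : Matrix X X ℝ} (hP : ∀ x y, 0 ≤ P x y) (hrow : ∀ x, ∑ y, P x y = 1) :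
    IsUnit (1 - γ • P).det := by
  rw [isUnit_iff_ne_zero]
  apply det_ne_zero_of_sum_row_lt_diag
  intro k
  have hPk1 : P k k ≤ 1 := by
    rw [← hrow k]
    exact Finset.single_le_sum (fun y _ => hP k y) (Finset.mem_univ k)
  have hsum : ∑ j ∈ Finset.univ.erase k, ‖(1 - γ • P) k j‖ = γ * (1 - P k k) := by
    have : ∀ j ∈ Finset.univ.erase k, ‖(1 - γ • P) k j‖ = γ * P k j := by
      intro j hj
      have hjk : j ≠ k := Finset.ne_of_mem_erase hj
      have : (1 - γ • P) k j = -(γ * P k j) := by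
        simp [Matrix.sub_apply, Matrix.one_apply, Matrix.smul_apply, Ne.symm hjk]
      rw [this, Real.norm_eq_abs, abs_neg, abs_of_nonneg (mul_nonneg hγ0 (hP k j))]
    rw [Finset.sum_congr rfl this, ← Finset.mul_sum,
      Finset.sum_erase_eq_sub (Finset.mem_univ k), hrow]
  have hdiag : ‖(1 - γ • P) k k‖ = 1 - γ * P k k := by
    have : (1 - γ • P) k k = 1 - γ * P k k := by
      simp [Matrix.sub_apply, Matrix.one_apply, Matrix.smul_apply]
    rw [this, Real.norm_eq_abs, abs_of_nonneg (by nlinarith)]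
  rw [hsum, hdiag]
  nlinarith

/-- Matrix-vector multiplication against a constant-shifted vector for stochastic rows. -/
lemma mulVec_const_sub {X : Type*} [Fintype X]
    {M : Matrix X X ℝ} (hrow : ∀ x, ∑ y, M x y = 1) (v : X → ℝ) (b : ℝ) (x : X) :
    M.mulVec (fun y => b - v y) x = b - M.mulVec v x := by
  simp only [Matrix.mulVec, dotProduct, mul_sub]
  rw [Finset.sum_sub_distrib, ← Finset.sum_mul, hrow, one_mul]

/-- the reward-adjusted return lower-bounds the robust return. -/
theorem reward_adjusted_le_robust {X A : Type*} [Fintype X] [Fintype A]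
    [DecidableEq X] [Nonempty X] [Nonempty A]
    (γ Rmax : ℝ) (hγ : γ ∈ Set.Ioo (0:ℝ) 1) (hR : 0 ≤ Rmax)
    (p0 : X → ℝ) (hp0 : (∀ x, 0 ≤ p0 x) ∧ ∑ x, p0 x = 1)
    (r : X → A → ℝ) (hr : ∀ x a, |r x a| ≤ Rmax)
    (Phat : X → A → X → ℝ)
    (hPhat : (∀ x a y, 0 ≤ Phat x a y) ∧ ∀ x a, ∑ y, Phat x a y = 1)
    (e : X → A → ℝ) (he : ∀ x a, 0 ≤ e x a)
    (Ξ : Set (X → A → X → ℝ))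
    (hΞ : Ξ = {ξ | (∀ x a y, 0 ≤ ξ x a y) ∧ (∀ x a, ∑ y, ξ x a y = 1) ∧
                   ∀ x a, ∑ y, |ξ x a y - Phat x a y| ≤ e x a})
    (π : X → A) :
    mdpReturn γ p0 (fun x a => r x a - γ * Rmax / (1 - γ) * e x a) π Phat
      ≤ sInf ((fun ξ => mdpReturn γ p0 r π ξ) '' Ξ) := by
  obtain ⟨hγ0, hγ1⟩ := hγ
  obtain ⟨hp0n, -⟩ := hp0
  obtain ⟨hPn, hPs⟩ := hPhat
  have h1γ : (0:ℝ) < 1 - γ := by linarith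
  have hne : ((fun ξ => mdpReturn γ p0 r π ξ) '' Ξ).Nonempty := by
    refine Set.Nonempty.image _ ⟨Phat, ?_⟩
    rw [hΞ]
    exact ⟨hPn, hPs, fun x a => by simp [he x a]⟩
  apply le_csInf hne
  rintro b ⟨ξ, hξ, rfl⟩
  rw [hΞ] at hξ
  obtain ⟨hξn, hξs, hξe⟩ := hξ
  simp only [mdpReturn]
  set c : ℝ := γ * Rmax / (1 - γ) with hc
  set B : ℝ := Rmax / (1 - γ) with hB
  have hB0 : 0 ≤ B := div_nonneg hR h1γ.le
  have hcB : c = γ * B := by rw [hc, hB, mul_div_assoc]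
  set P : Matrix X X ℝ := Matrix.of (fun x y => Phat x (π x) y) with hPdef
  set Q : Matrix X X ℝ := Matrix.of (fun x y => ξ x (π x) y) with hQdef
  have hPe : ∀ x y, 0 ≤ P x y := fun x y => hPn x (π x) y
  have hProw : ∀ x, ∑ y, P x y = 1 := fun x => hPs x (π x)
  have hQe : ∀ x y, 0 ≤ Q x y := fun x y => hξn x (π x) y
  have hQrow : ∀ x, ∑ y, Q x y = 1 := fun x => hξs x (π x)
  have hMP : IsUnit (1 - γ • P).det := isUnit_det_one_sub_smul hγ0.le hγ1 hPe hProw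
  have hMQ : IsUnit (1 - γ • Q).det := isUnit_det_one_sub_smul hγ0.le hγ1 hQe hQrow
  set V : X → ℝ := (1 - γ • Q)⁻¹ *ᵥ (fun x => r x (π x)) with hV
  set Vt : X → ℝ := (1 - γ • P)⁻¹ *ᵥ (fun x => r x (π x) - c * e x (π x)) with hVt
  -- the defining equations
  have hexp : ∀ (M : Matrix X X ℝ) (v : X → ℝ) (x : X),
      ((1 - γ • M) *ᵥ v) x = v x - γ * (M *ᵥ v) x := by
    intro M v x
    simp [Matrix.sub_mulVec, Matrix.smul_mulVec, Matrix.one_mulVec]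
  have hVeq : ∀ x, V x = γ * (Q *ᵥ V) x + r x (π x) := by
    intro x
    have h0 : (1 - γ • Q) *ᵥ V = fun x => r x (π x) := by
      rw [hV, Matrix.mulVec_mulVec, Matrix.mul_nonsing_inv _ hMQ, Matrix.one_mulVec]
    have := congrFun h0 x
    rw [hexp] at this
    linarith
  have hVteq : ∀ x, Vt x = γ * (P *ᵥ Vt) x + (r x (π x) - c * e x (π x)) := by
    intro x
    have h0 : (1 - γ • P) *ᵥ Vt = fun x => r x (π x) - c * e x (π x) := by
      rw [hVt, Matrix.mulVec_mulVec, Matrix.mul_nonsing_inv _ hMP, Matrix.one_mulVec]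
    have := congrFun h0 x
    rw [hexp] at this
    linarith
  -- bound on V
  have hBfix : B = γ * B + Rmax := by
    have h := div_mul_cancel₀ Rmax h1γ.ne'
    rw [← hB] at h
    linear_combination h
  have hVub : ∀ x, V x ≤ B := by
    have := nonneg_of_fixpoint hγ0.le hγ1 hQe hQrow
      (W := fun x => B - V x) (w := fun x => Rmax - r x (π x))
      (fun x => by beta_reduce; have := abs_le.mp (hr x (π x)); linarith)
      (fun x => by
        beta_reduce
        rw [mulVec_const_sub hQrow]
        have := hVeq x
        nlinarith [hVeq x, hBfix])
    intro x
    have h := this x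
    linarith
  have hVlb : ∀ x, -B ≤ V x := by
    have := nonneg_of_fixpoint hγ0.le hγ1 hQe hQrow
      (W := fun x => B + V x) (w := fun x => Rmax + r x (π x))
      (fun x => by beta_reduce; have := abs_le.mp (hr x (π x)); linarith)
      (fun x => by
        beta_reduce
        have h1 : (Q *ᵥ (fun y => B + V y)) x = B + (Q *ᵥ V) x := by
          have := mulVec_const_sub hQrow (fun y => - V y) B x
          simp only [sub_neg_eq_add] at this
          rw [this]
          have h2 : (Q *ᵥ (fun y => -V y)) x = -(Q *ᵥ V) x := by
            simp [Matrix.mulVec, dotProduct, mul_comm, ← Finset.sum_neg_distrib]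
          rw [h2]; ring
        rw [h1]
        nlinarith [hVeq x, hBfix])
    intro x
    have h := this x
    linarith
  -- the difference W = V - Vt is nonnegative
  have hW : ∀ x, 0 ≤ V x - Vt x := by
    apply nonneg_of_fixpoint hγ0.le hγ1 hPe hProw
      (W := fun x => V x - Vt x)
      (w := fun x => γ * ((Q - P) *ᵥ V) x + c * e x (π x))
    · intro x
      have habs : |((Q - P) *ᵥ V) x| ≤ e x (π x) * B := by
        have h1 : ((Q - P) *ᵥ V) x = ∑ y, (Q x y - P x y) * V y := by
          simp [Matrix.mulVec, dotProduct, Matrix.sub_apply]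
        rw [h1]
        calc |∑ y, (Q x y - P x y) * V y| ≤ ∑ y, |(Q x y - P x y) * V y| :=
              Finset.abs_sum_le_sum_abs _ _
        _ = ∑ y, |Q x y - P x y| * |V y| := by simp [abs_mul]
        _ ≤ ∑ y, |Q x y - P x y| * B := by
              refine Finset.sum_le_sum fun y _ => ?_
              exact mul_le_mul_of_nonneg_left
                (abs_le.mpr ⟨hVlb y, hVub y⟩) (abs_nonneg _)
        _ = (∑ y, |Q x y - P x y|) * B := by rw [Finset.sum_mul]
        _ ≤ e x (π x) * B := by
              refine mul_le_mul_of_nonneg_right ?_ hB0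
              exact hξe x (π x)
      have := abs_le.mp habs
      nlinarith [he x (π x)]
    · intro x
      have h1 : (P *ᵥ (fun x => V x - Vt x)) x = (P *ᵥ V) x - (P *ᵥ Vt) x := by
        simp [Matrix.mulVec, dotProduct, mul_sub, Finset.sum_sub_distrib]
      rw [h1]
      have h2 : ((Q - P) *ᵥ V) x = (Q *ᵥ V) x - (P *ᵥ V) x := by
        simp [Matrix.sub_mulVec]
      rw [h2]
      linear_combination hVeq x - hVteq x
  -- conclude
  simp only [dotProduct]
  refine Finset.sum_le_sum fun x _ => ?_
  have : Vt x ≤ V x := by linarith [hW x]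
  exact mul_le_mul_of_nonneg_left this (hp0n x)
end

section
/- Under the assumption ‖P*(·|x,a) - P̂(·|x,a)‖_1 ≤ e(x,a) for all (x,a), for every policy π the reward-adjusted return lower-bounds the true return: ρ(π, ξ̃) ≤ ρ(π, P*), where ξ̃ has transitions P̂ and rewards r̂(x,a) = r(x,a) - (γR_max/(1-γ)) e(x,a). -/
open Matrix

section Helpers

variable {X : Type*} [Fintype X] [DecidableEq X]

attribute [local instance] Matrix.linftyOpNormedRing Matrix.linftyOpNormedAlgebra

lemma stoch_norm_lt_one (γ : ℝ) (hγ : γ ∈ Set.Ioo (0:ℝ) 1) (P : Matrix X X ℝ)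
    (h0 : ∀ i j, 0 ≤ P i j) (h1 : ∀ i, ∑ j, P i j = 1) : ‖γ • P‖ < 1 := by
  have hP : ‖P‖ ≤ 1 := by
    rw [Matrix.linfty_opNorm_def]
    have : ((Finset.univ : Finset X).sup fun i : X => ∑ j : X, ‖P i j‖₊) ≤ 1 := by
      apply Finset.sup_le
      intro i _
      have : ((∑ j : X, ‖P i j‖₊ : NNReal) : ℝ) = 1 := by
        push_cast
        rw [← h1 i]
        exact Finset.sum_congr rfl fun j _ => by
          rw [Real.norm_eq_abs, abs_of_nonneg (h0 i j)]
      exact_mod_cast this.le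
    exact_mod_cast this
  calc ‖γ • P‖ = |γ| * ‖P‖ := by rw [norm_smul, Real.norm_eq_abs]
    _ ≤ |γ| * 1 := by
        apply mul_le_mul_of_nonneg_left hP (abs_nonneg γ)
    _ = |γ| := mul_one _
    _ < 1 := by rw [abs_of_pos hγ.1]; exact hγ.2

lemma stoch_isUnit_s15 (γ : ℝ) (hγ : γ ∈ Set.Ioo (0:ℝ) 1) (P : Matrix X X ℝ)
    (h0 : ∀ i j, 0 ≤ P i j) (h1 : ∀ i, ∑ j, P i j = 1) : IsUnit (1 - γ • P) :=
  isUnit_one_sub_of_norm_lt_one (stoch_norm_lt_one γ hγ P h0 h1)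

lemma pow_entry_nonneg (P : Matrix X X ℝ) (h0 : ∀ i j, 0 ≤ P i j) (n : ℕ) :
    ∀ i j, 0 ≤ (P ^ n) i j := by
  induction n with
  | zero => intro i j; simp [Matrix.one_apply]; positivity
  | succ n ih =>
      intro i j
      rw [pow_succ, Matrix.mul_apply]
      exact Finset.sum_nonneg fun k _ => mul_nonneg (ih i k) (h0 k j)

lemma stoch_inv_nonneg (γ : ℝ) (hγ : γ ∈ Set.Ioo (0:ℝ) 1) (P : Matrix X X ℝ)
    (h0 : ∀ i j, 0 ≤ P i j) (h1 : ∀ i, ∑ j, P i j = 1) :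
    ∀ i j, 0 ≤ (1 - γ • P)⁻¹ i j := by
  have hn := stoch_norm_lt_one γ hγ P h0 h1
  have hsum : Summable fun n : ℕ => (γ • P) ^ n := summable_geometric_of_norm_lt_one hn
  have hinv : (1 - γ • P)⁻¹ = ∑' n : ℕ, (γ • P) ^ n := by
    rw [Matrix.nonsing_inv_eq_ringInverse, ← geom_series_eq_inverse _ hn]
    rfl
  intro i j
  rw [hinv]
  -- entry of tsum
  have : (∑' n : ℕ, (γ • P) ^ n) i j = ∑' n : ℕ, ((γ • P) ^ n) i j := by
    let f : Matrix X X ℝ →ₗ[ℝ] ℝ :=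
      (LinearMap.proj (R := ℝ) (φ := fun _ : X => ℝ) j).comp
        (LinearMap.proj (R := ℝ) (φ := fun _ : X => X → ℝ) i)
    have hf : Continuous f := f.continuous_of_finiteDimensional
    let g : Matrix X X ℝ →L[ℝ] ℝ := ⟨f, hf⟩
    exact g.map_tsum hsum
  rw [this]
  apply tsum_nonneg
  intro n
  have : (γ • P) ^ n = γ ^ n • P ^ n := by
    rw [smul_pow]
  rw [this]
  have := pow_entry_nonneg P h0 n i j
  simp only [Matrix.smul_apply, smul_eq_mul]
  exact mul_nonneg (pow_nonneg hγ.1.le n) this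

lemma stoch_value_eq (γ : ℝ) (hγ : γ ∈ Set.Ioo (0:ℝ) 1) (P : Matrix X X ℝ)
    (h0 : ∀ i j, 0 ≤ P i j) (h1 : ∀ i, ∑ j, P i j = 1) (r : X → ℝ) :
    ∀ x, ((1 - γ • P)⁻¹.mulVec r) x = r x + γ * (P.mulVec ((1 - γ • P)⁻¹.mulVec r)) x := by
  have hu := stoch_isUnit_s15 γ hγ P h0 h1
  have hdet : IsUnit (1 - γ • P).det := (Matrix.isUnit_iff_isUnit_det _).mp hu
  set v := (1 - γ • P)⁻¹.mulVec r with hv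
  have key : (1 - γ • P).mulVec v = r := by
    rw [hv, Matrix.mulVec_mulVec, Matrix.mul_nonsing_inv _ hdet, Matrix.one_mulVec]
  intro x
  have := congrFun key x
  rw [Matrix.sub_mulVec, Matrix.one_mulVec, Matrix.smul_mulVec] at this
  have : v x - γ * (P.mulVec v) x = r x := this
  linarith

lemma stoch_value_bound [Nonempty X] (γ : ℝ) (hγ : γ ∈ Set.Ioo (0:ℝ) 1) (P : Matrix X X ℝ)
    (h0 : ∀ i j, 0 ≤ P i j) (h1 : ∀ i, ∑ j, P i j = 1) (r : X → ℝ) (R : ℝ)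
    (hr : ∀ x, |r x| ≤ R) :
    ∀ x, |((1 - γ • P)⁻¹.mulVec r) x| ≤ R / (1 - γ) := by
  set v := (1 - γ • P)⁻¹.mulVec r with hv
  have heq := stoch_value_eq γ hγ P h0 h1 r
  simp only [← hv] at heq
  obtain ⟨x0, -, hx0⟩ := Finset.exists_mem_eq_sup'
    (Finset.univ_nonempty : (Finset.univ : Finset X).Nonempty) (fun x => |v x|)
  have hle : ∀ x, |v x| ≤ |v x0| := by
    intro x
    have h2 := Finset.le_sup' (fun y : X => |v y|) (Finset.mem_univ x)
    simp only [hx0] at h2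
    exact h2
  have hbound : |v x0| ≤ R + γ * |v x0| := by
    calc |v x0| = |r x0 + γ * (P.mulVec v) x0| := by rw [heq x0]
      _ ≤ |r x0| + |γ * (P.mulVec v) x0| := abs_add_le _ _
      _ ≤ R + γ * |(P.mulVec v) x0| := by
          rw [abs_mul, abs_of_pos hγ.1]
          exact add_le_add (hr x0) le_rfl
      _ ≤ R + γ * |v x0| := by
          apply add_le_add le_rfl
          apply mul_le_mul_of_nonneg_left _ hγ.1.le
          calc |(P.mulVec v) x0| = |∑ y, P x0 y * v y| := by rw [Matrix.mulVec, dotProduct]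
            _ ≤ ∑ y, |P x0 y * v y| := Finset.abs_sum_le_sum_abs _ _
            _ ≤ ∑ y, P x0 y * |v x0| := by
                apply Finset.sum_le_sum
                intro y _
                rw [abs_mul, abs_of_nonneg (h0 x0 y)]
                exact mul_le_mul_of_nonneg_left (hle y) (h0 x0 y)
            _ = |v x0| := by rw [← Finset.sum_mul, h1 x0, one_mul]
  intro x
  have h1γ : 0 < 1 - γ := by linarith [hγ.2]
  have : |v x0| ≤ R / (1 - γ) := by
    rw [le_div_iff₀ h1γ]
    linarith
  exact (hle x).trans this

end Helpers


/-- the reward-adjusted return lower-bounds the true return. -/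
theorem reward_adjusted_le_true {X A : Type*} [Fintype X] [Fintype A]
    [DecidableEq X] [Nonempty X] [Nonempty A]
    (γ Rmax : ℝ) (hγ : γ ∈ Set.Ioo (0:ℝ) 1) (hR : 0 ≤ Rmax)
    (p0 : X → ℝ) (hp0 : (∀ x, 0 ≤ p0 x) ∧ ∑ x, p0 x = 1)
    (r : X → A → ℝ) (hr : ∀ x a, |r x a| ≤ Rmax)
    (Pstar Phat : X → A → X → ℝ)
    (hPstar : (∀ x a y, 0 ≤ Pstar x a y) ∧ ∀ x a, ∑ y, Pstar x a y = 1)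
    (hPhat : (∀ x a y, 0 ≤ Phat x a y) ∧ ∀ x a, ∑ y, Phat x a y = 1)
    (e : X → A → ℝ) (he : ∀ x a, 0 ≤ e x a)
    (hdist : ∀ x a, ∑ y, |Pstar x a y - Phat x a y| ≤ e x a)
    (π : X → A) :
    mdpReturn γ p0 (fun x a => r x a - γ * Rmax / (1 - γ) * e x a) π Phat
      ≤ mdpReturn γ p0 r π Pstar := by
  have h1γ : 0 < 1 - γ := by linarith [hγ.2]
  set c : ℝ := γ * Rmax / (1 - γ) with hc
  set Ps : Matrix X X ℝ := Matrix.of (fun x y => Pstar x (π x) y) with hPs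
  set Ph : Matrix X X ℝ := Matrix.of (fun x y => Phat x (π x) y) with hPh
  have hPs0 : ∀ i j, 0 ≤ Ps i j := fun i j => hPstar.1 i (π i) j
  have hPs1 : ∀ i, ∑ j, Ps i j = 1 := fun i => hPstar.2 i (π i)
  have hPh0 : ∀ i j, 0 ≤ Ph i j := fun i j => hPhat.1 i (π i) j
  have hPh1 : ∀ i, ∑ j, Ph i j = 1 := fun i => hPhat.2 i (π i)
  set rp : X → ℝ := fun x => r x (π x) with hrp
  set rh : X → ℝ := fun x => rp x - c * e x (π x) with hrh
  set Vs : X → ℝ := ((1 - γ • Ps)⁻¹).mulVec rp with hVs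
  set Vh : X → ℝ := ((1 - γ • Ph)⁻¹).mulVec rh with hVh
  have hVsB : ∀ x, |Vs x| ≤ Rmax / (1 - γ) :=
    stoch_value_bound γ hγ Ps hPs0 hPs1 rp Rmax (fun x => hr x (π x))
  have hVseq : ∀ x, Vs x = rp x + γ * (Ps.mulVec Vs) x := by
    intro x
    have := stoch_value_eq γ hγ Ps hPs0 hPs1 rp x
    rwa [← hVs] at this
  have hdetH : IsUnit (1 - γ • Ph).det :=
    (Matrix.isUnit_iff_isUnit_det _).mp (stoch_isUnit_s15 γ hγ Ph hPh0 hPh1)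
  have hBhVh : (1 - γ • Ph).mulVec Vh = rh := by
    rw [hVh, Matrix.mulVec_mulVec, Matrix.mul_nonsing_inv _ hdetH, Matrix.one_mulVec]
  -- nonnegativity of B_hat (Vs - Vh)
  have hkey : ∀ x, 0 ≤ ((1 - γ • Ph).mulVec (Vs - Vh)) x := by
    intro x
    have hexp : ((1 - γ • Ph).mulVec (Vs - Vh)) x
        = γ * ((Ps.mulVec Vs) x - (Ph.mulVec Vs) x) + c * e x (π x) := by
      rw [Matrix.mulVec_sub]
      have h2 : ((1 - γ • Ph).mulVec Vs) x = Vs x - γ * (Ph.mulVec Vs) x := by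
        rw [Matrix.sub_mulVec, Matrix.one_mulVec, Matrix.smul_mulVec]
        simp
      have h3 : ((1 - γ • Ph).mulVec Vh) x = rp x - c * e x (π x) := by
        rw [hBhVh]
      simp only [Pi.sub_apply, h2, h3]
      rw [hVseq x]
      ring
    rw [hexp]
    set d : ℝ := (Ps.mulVec Vs) x - (Ph.mulVec Vs) x with hd
    have habs : |d| ≤ e x (π x) * (Rmax / (1 - γ)) := by
      rw [hd]
      calc |(Ps.mulVec Vs) x - (Ph.mulVec Vs) x|
          = |∑ y, (Ps x y - Ph x y) * Vs y| := by
            rw [Matrix.mulVec, Matrix.mulVec, dotProduct, dotProduct, ← Finset.sum_sub_distrib]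
            congr 1
            exact Finset.sum_congr rfl fun y _ => by ring
        _ ≤ ∑ y, |(Ps x y - Ph x y) * Vs y| := Finset.abs_sum_le_sum_abs _ _
        _ ≤ ∑ y, |Ps x y - Ph x y| * (Rmax / (1 - γ)) := by
            apply Finset.sum_le_sum
            intro y _
            rw [abs_mul]
            exact mul_le_mul_of_nonneg_left (hVsB y) (abs_nonneg _)
        _ = (∑ y, |Ps x y - Ph x y|) * (Rmax / (1 - γ)) := (Finset.sum_mul _ _ _).symm
        _ ≤ e x (π x) * (Rmax / (1 - γ)) := by
            apply mul_le_mul_of_nonneg_right _ (by positivity)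
            exact hdist x (π x)
    have hce : c * e x (π x) = γ * (e x (π x) * (Rmax / (1 - γ))) := by
      rw [hc]; ring
    have hmd : -d ≤ e x (π x) * (Rmax / (1 - γ)) := (neg_le_abs d).trans habs
    have : γ * (-d) ≤ γ * (e x (π x) * (Rmax / (1 - γ))) :=
      mul_le_mul_of_nonneg_left hmd hγ.1.le
    rw [hce]
    linarith
  -- Vs - Vh is componentwise nonnegative
  have hw : ∀ x, Vh x ≤ Vs x := by
    have hinv := stoch_inv_nonneg γ hγ Ph hPh0 hPh1
    intro x
    have hrec : Vs - Vh = ((1 - γ • Ph)⁻¹).mulVec ((1 - γ • Ph).mulVec (Vs - Vh)) := by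
      rw [Matrix.mulVec_mulVec, Matrix.nonsing_inv_mul _ hdetH, Matrix.one_mulVec]
    have h0 : 0 ≤ (Vs - Vh) x := by
      rw [hrec]
      rw [Matrix.mulVec, dotProduct]
      exact Finset.sum_nonneg fun y _ => mul_nonneg (hinv x y) (hkey y)
    have := h0
    rw [Pi.sub_apply] at this
    linarith
  -- conclude
  show p0 ⬝ᵥ ((1 - γ • Matrix.of (fun x y => Phat x (π x) y))⁻¹).mulVec
      (fun x => r x (π x) - γ * Rmax / (1 - γ) * e x (π x))
    ≤ p0 ⬝ᵥ ((1 - γ • Matrix.of (fun x y => Pstar x (π x) y))⁻¹).mulVec (fun x => r x (π x))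
  have hl : p0 ⬝ᵥ ((1 - γ • Matrix.of (fun x y => Phat x (π x) y))⁻¹).mulVec
      (fun x => r x (π x) - γ * Rmax / (1 - γ) * e x (π x)) = p0 ⬝ᵥ Vh := rfl
  have hr' : p0 ⬝ᵥ ((1 - γ • Matrix.of (fun x y => Pstar x (π x) y))⁻¹).mulVec
      (fun x => r x (π x)) = p0 ⬝ᵥ Vs := rfl
  rw [hl, hr', dotProduct, dotProduct]
  exact Finset.sum_le_sum fun x _ => mul_le_mul_of_nonneg_left (hw x) (hp0.1 x)
end

section
/- Robust algorithm performance bound: assume P* ∈ Ξ, and for every policy π, ρ(π,P*) - min_{ξ∈Ξ} ρ(π,ξ) ≤ B(π) for a given bound function B. Let π_R be the output of the robust algorithm (π_0 = argmax_π min_ξ ρ(π,ξ) if min_ξ ρ(π_0,ξ) > max_ξ ρ(π_B,ξ), else π_B). Then ρ(π*,P*) - ρ(π_R,P*) ≤ min{ B(π*) + B(π_B), ρ(π*,P*) - ρ(π_B,P*) }. -/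
/-- performance bound for the robust algorithm's output. -/
theorem robust_algorithm_performance {Pol Mdl : Type*}
    [Fintype Pol] [Fintype Mdl] [Nonempty Pol] [Nonempty Mdl]
    (ρ : Pol → Mdl → ℝ) (B : Pol → ℝ) (πB πstar π0 πR : Pol) (Pstar : Mdl)
    (hB : ∀ (π : Pol) (ξ : Mdl), |ρ π ξ - ρ π Pstar| ≤ B π)
    (hopt : ∀ π : Pol, ρ π Pstar ≤ ρ πstar Pstar)
    (hπ0 : ∀ π : Pol, (⨅ ξ : Mdl, ρ π ξ) ≤ ⨅ ξ : Mdl, ρ π0 ξ)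
    (hπR : ((⨆ ξ : Mdl, ρ πB ξ) < (⨅ ξ : Mdl, ρ π0 ξ) ∧ πR = π0) ∨
           (¬ (⨆ ξ : Mdl, ρ πB ξ) < (⨅ ξ : Mdl, ρ π0 ξ) ∧ πR = πB)) :
    ρ πstar Pstar - ρ πR Pstar
      ≤ min (B πstar + B πB) (ρ πstar Pstar - ρ πB Pstar) := by
  have hBnn : ∀ π : Pol, 0 ≤ B π := fun π => le_trans (abs_nonneg _) (hB π Pstar)
  have hinf_le : ∀ π : Pol, (⨅ ξ : Mdl, ρ π ξ) ≤ ρ π Pstar := fun π =>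
    ciInf_le (Set.Finite.bddBelow (Set.finite_range _)) Pstar
  have hle_sup : ∀ π : Pol, ρ π Pstar ≤ ⨆ ξ : Mdl, ρ π ξ := fun π =>
    le_ciSup (Set.Finite.bddAbove (Set.finite_range _)) Pstar
  have hinf_ge : ∀ π : Pol, ρ π Pstar - B π ≤ ⨅ ξ : Mdl, ρ π ξ := by
    intro π
    apply le_ciInf
    intro ξ
    have := abs_le.mp (hB π ξ)
    linarith [this.1]
  have hsup_le : ∀ π : Pol, (⨆ ξ : Mdl, ρ π ξ) ≤ ρ π Pstar + B π := by
    intro π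
    apply ciSup_le
    intro ξ
    have := abs_le.mp (hB π ξ)
    linarith [this.2]
  rcases hπR with ⟨hlt, hR⟩ | ⟨hge, hR⟩
  · subst hR
    have h1 : ρ πstar Pstar - B πstar ≤ ⨅ ξ : Mdl, ρ πR ξ :=
      le_trans (hinf_ge πstar) (hπ0 πstar)
    have h2 := hinf_le πR
    have h3 := hle_sup πB
    have h4 := hsup_le πB
    apply le_min
    · linarith [hBnn πB]
    · linarith
  · subst hR
    push_neg at hge
    have h1 : ρ πstar Pstar - B πstar ≤ ⨆ ξ : Mdl, ρ πR ξ :=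
      le_trans (le_trans (hinf_ge πstar) (hπ0 πstar)) hge
    have h2 := hsup_le πR
    exact le_min (by linarith) (le_refl _)
end
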